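/- arXiv:1307.3963 — 2 statements merged into one kernel-verified Lean document; each statement's English description precedes it below -/
import Mathlib

section
/- Let X_1, X_2, … be i.i.d. real random variables, S_n their partial sums, τ_n = min{0 ≤ k ≤ n : S_k = min(S_0,…,S_n)} (with S_0 = 0), L_m = min(S_1,…,S_m), and ρ ∈ (0,1). Then for every 1 ≤ k ≤ n−1, E[ e^{(1−ρ) S_k + ρ(S_k − S_n)} ; τ_n = k ] = E[ e^{(1−ρ) S_k} ; τ_k = k ] · E[ e^{−ρ S_{n−k}} ; L_{n−k} ≥ 0 ]. -/
open MeasureTheory ProbabilityTheory Filter Real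

namespace Stmt5Aux

noncomputable def psum (m : ℕ) (v : Fin m → ℝ) (j : ℕ) : ℝ :=
  ∑ i ∈ Finset.range j, if h : i < m then v ⟨i, h⟩ else 0

lemma psum_meas (m j : ℕ) : Measurable fun v : Fin m → ℝ => psum m v j := by
  unfold psum
  refine Finset.measurable_sum _ fun i _ => ?_
  by_cases h : i < m
  · simpa [h] using measurable_pi_apply (⟨i, h⟩ : Fin m)
  · simp [h]

lemma psum_eq (m : ℕ) (Y : ℕ → ℝ) (j : ℕ) (hj : j ≤ m) :
    psum m (fun i : Fin m => Y i) j = ∑ i ∈ Finset.range j, Y i := by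
  unfold psum
  refine Finset.sum_congr rfl fun i hi => ?_
  have h : i < m := lt_of_lt_of_le (Finset.mem_range.mp hi) hj
  simp [h]

lemma map_tuple_eq {Ω : Type*} [MeasurableSpace Ω] (P : Measure Ω) [IsProbabilityMeasure P]
    (X : ℕ → Ω → ℝ) (hmeas : ∀ i, Measurable (X i))
    (hindep : iIndepFun X P)
    (hident : ∀ i, Measure.map (X i) P = Measure.map (X 1) P)
    (m a : ℕ) :
    Measure.map (fun ω (i : Fin m) => X (a + 1 + i) ω) P
      = Measure.pi fun _ : Fin m => Measure.map (X 1) P := by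
  classical
  have hPM : IsProbabilityMeasure (Measure.map (X 1) P) :=
    Measure.isProbabilityMeasure_map (hmeas 1).aemeasurable
  refine (Measure.pi_eq fun s hs => ?_).symm
  have hYm : Measurable (fun ω (i : Fin m) => X (a + 1 + i) ω) :=
    measurable_pi_lambda _ fun i => hmeas _
  rw [Measure.map_apply hYm (MeasurableSet.univ_pi hs)]
  have hpre : (fun ω (i : Fin m) => X (a + 1 + i) ω) ⁻¹' Set.pi Set.univ s
      = ⋂ i : Fin m, X (a + 1 + i) ⁻¹' s i := by
    ext ω; simp [Set.mem_pi]
  rw [hpre]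
  set t : ℕ → Set ℝ := fun j => ⋂ (i : Fin m) (_ : j = a + 1 + i), s i with ht
  have htm : ∀ j, MeasurableSet (t j) := fun j =>
    MeasurableSet.iInter fun i => MeasurableSet.iInter fun _ => hs i
  have hteq : ∀ i : Fin m, t (a + 1 + i) = s i := by
    intro i; ext x
    simp only [ht, Set.mem_iInter]
    constructor
    · intro h; exact h i rfl
    · intro hx i' h
      have hii : i' = i := Fin.ext (by omega)
      rwa [hii]
  set T : Finset ℕ := Finset.image (fun i : Fin m => a + 1 + i.val) Finset.univ with hT
  have hint : (⋂ i : Fin m, X (a + 1 + i) ⁻¹' s i) = ⋂ j ∈ T, X j ⁻¹' t j := by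
    ext ω
    simp only [Set.mem_iInter, hT, Finset.mem_image, Finset.mem_univ, true_and,
      Set.mem_preimage]
    constructor
    · rintro h j ⟨i, rfl⟩
      rw [hteq i]; exact h i
    · intro h i
      have := h (a + 1 + i) ⟨i, rfl⟩
      rwa [hteq i] at this
  rw [hint, hindep.measure_inter_preimage_eq_mul T (fun i _ => htm i)]
  rw [Finset.prod_image (fun i _ j _ h => Fin.ext (by omega : (i : Fin m).val = j.val))]
  refine Finset.prod_congr rfl fun i _ => ?_
  rw [hteq i, ← hident (a + 1 + i), Measure.map_apply (hmeas _) (hs i)]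

end Stmt5Aux

open Stmt5Aux in
/-- for an i.i.d. random walk `S`, `τ_n` the first time of the minimum of
`S 0, …, S n`, `L_m = min (S 1, …, S m)` and `ρ ∈ (0,1)`, for `1 ≤ k ≤ n - 1`:
`E[exp ((1-ρ) S k + ρ (S k - S n)); τ_n = k]
  = E[exp ((1-ρ) S k); τ_k = k] * E[exp (-ρ S (n-k)); L_{n-k} ≥ 0]`. -/
theorem stmt5 {Ω : Type*} [MeasurableSpace Ω] (P : Measure Ω) [IsProbabilityMeasure P]
    (X : ℕ → Ω → ℝ) (hmeas : ∀ i, Measurable (X i))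
    (hindep : iIndepFun X P)
    (hident : ∀ i, Measure.map (X i) P = Measure.map (X 1) P)
    (S : ℕ → Ω → ℝ) (hS0 : ∀ ω, S 0 ω = 0)
    (hSsucc : ∀ m ω, S (m + 1) ω = S m ω + X (m + 1) ω)
    (ρ : ℝ) (hρ : ρ ∈ Set.Ioo (0:ℝ) 1) (n k : ℕ) (hk : 1 ≤ k) (hkn : k ≤ n - 1) (hn : 1 ≤ n) :
    ∫ ω in {ω | (∀ i < k, S k ω < S i ω) ∧ ∀ i, k ≤ i → i ≤ n → S k ω ≤ S i ω},
        exp ((1 - ρ) * S k ω + ρ * (S k ω - S n ω)) ∂P =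
      (∫ ω in {ω | ∀ i < k, S k ω < S i ω}, exp ((1 - ρ) * S k ω) ∂P) *
        ∫ ω in {ω | ∀ i, 1 ≤ i → i ≤ n - k → 0 ≤ S i ω}, exp (-ρ * S (n - k) ω) ∂P := by
  classical
  set m := n - k with hm_def
  have hkm : k + m = n := by omega
  -- partial sums as explicit sums
  have hSsum : ∀ j, ∀ ω, S j ω = ∑ i ∈ Finset.range j, X (i + 1) ω := by
    intro j
    induction j with
    | zero => intro ω; simp [hS0]
    | succ j ih => intro ω; rw [hSsucc, ih ω, Finset.sum_range_succ]
  have hSmeas : ∀ j, Measurable (S j) := by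
    intro j
    have h : S j = fun ω => ∑ i ∈ Finset.range j, X (i + 1) ω := funext (hSsum j)
    rw [h]
    exact Finset.measurable_sum _ fun i _ => hmeas _
  -- the two functions on finite-dimensional space
  set f : (Fin k → ℝ) → ℝ :=
    Set.indicator {v | ∀ i < k, psum k v k < psum k v i}
      (fun v => exp ((1 - ρ) * psum k v k)) with hf_def
  set g : (Fin m → ℝ) → ℝ :=
    Set.indicator {v | ∀ j, 1 ≤ j → j ≤ m → 0 ≤ psum m v j}
      (fun v => exp (-ρ * psum m v m)) with hg_def
  have hfsm : MeasurableSet {v : Fin k → ℝ | ∀ i < k, psum k v k < psum k v i} := by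
    have h : {v : Fin k → ℝ | ∀ i < k, psum k v k < psum k v i}
        = ⋂ i ∈ Finset.range k, {v | psum k v k < psum k v i} := by
      ext v; simp
    rw [h]
    exact Finset.measurableSet_biInter _
      fun i _ => measurableSet_lt (psum_meas k k) (psum_meas k i)
  have hgsm : MeasurableSet {v : Fin m → ℝ | ∀ j, 1 ≤ j → j ≤ m → 0 ≤ psum m v j} := by
    have h : {v : Fin m → ℝ | ∀ j, 1 ≤ j → j ≤ m → 0 ≤ psum m v j}
        = ⋂ j ∈ Finset.Icc 1 m, {v | 0 ≤ psum m v j} := by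
      ext v; simp [Finset.mem_Icc]
    rw [h]
    exact Finset.measurableSet_biInter _
      fun j _ => measurableSet_le measurable_const (psum_meas m j)
  have hfm : Measurable f :=
    (Real.measurable_exp.comp ((psum_meas k k).const_mul (1 - ρ))).indicator hfsm
  have hgm : Measurable g :=
    (Real.measurable_exp.comp ((psum_meas m m).const_mul (-ρ))).indicator hgsm
  -- tuples
  have hY1m : Measurable (fun ω (i : Fin k) => X (i + 1) ω) :=
    measurable_pi_lambda _ fun i => hmeas _
  have hY2m : Measurable (fun ω (i : Fin m) => X (k + 1 + i) ω) :=
    measurable_pi_lambda _ fun i => hmeas _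
  have hZm : Measurable (fun ω (i : Fin m) => X (1 + i) ω) :=
    measurable_pi_lambda _ fun i => hmeas _
  -- pointwise identities
  have hps1 : ∀ ω, ∀ j ≤ k, psum k (fun i : Fin k => X (i + 1) ω) j = S j ω := by
    intro ω j hj
    rw [hSsum j ω]
    exact psum_eq k (fun i => X (i + 1) ω) j hj
  have hfY1 : ∀ ω, f (fun i : Fin k => X (i + 1) ω)
      = Set.indicator {ω | ∀ i < k, S k ω < S i ω} (fun ω => exp ((1 - ρ) * S k ω)) ω := by
    intro ω
    have hcond : (∀ i < k, psum k (fun i : Fin k => X (i + 1) ω) k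
        < psum k (fun i : Fin k => X (i + 1) ω) i) ↔ (∀ i < k, S k ω < S i ω) := by
      refine forall₂_congr fun i hi => ?_
      rw [hps1 ω k le_rfl, hps1 ω i hi.le]
    simp only [hf_def, Set.indicator_apply, Set.mem_setOf_eq]
    exact if_congr hcond (by rw [hps1 ω k le_rfl]) rfl
  have hps2 : ∀ ω, ∀ j ≤ m, psum m (fun i : Fin m => X (k + 1 + i) ω) j
      = S (k + j) ω - S k ω := by
    intro ω j hj
    have h1 : psum m (fun i : Fin m => X (k + 1 + i) ω) j
        = ∑ i ∈ Finset.range j, X (k + 1 + i) ω :=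
      psum_eq m (fun i => X (k + 1 + i) ω) j hj
    rw [h1, hSsum (k + j) ω, hSsum k ω, Finset.sum_range_add]
    have h2 : ∀ i, X (k + 1 + i) ω = X (k + i + 1) ω := fun i => by
      rw [show k + 1 + i = k + i + 1 by omega]
    simp only [h2]
    ring
  have hgY2 : ∀ ω, g (fun i : Fin m => X (k + 1 + i) ω)
      = Set.indicator {ω | ∀ i, k ≤ i → i ≤ n → S k ω ≤ S i ω}
        (fun ω => exp (-ρ * (S n ω - S k ω))) ω := by
    intro ω
    have hcond : (∀ j, 1 ≤ j → j ≤ m → 0 ≤ psum m (fun i : Fin m => X (k + 1 + i) ω) j)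
        ↔ (∀ i, k ≤ i → i ≤ n → S k ω ≤ S i ω) := by
      constructor
      · intro h i hki hin
        rcases eq_or_lt_of_le hki with rfl | hki'
        · exact le_rfl
        · have h1 : 1 ≤ i - k := by omega
          have h2 : i - k ≤ m := by omega
          have := h (i - k) h1 h2
          rw [hps2 ω (i - k) h2, show k + (i - k) = i by omega] at this
          linarith
      · intro h j h1 h2
        rw [hps2 ω j h2]
        have := h (k + j) (by omega) (by omega)
        linarith
    have hval : psum m (fun i : Fin m => X (k + 1 + i) ω) m = S n ω - S k ω := by
      rw [hps2 ω m le_rfl, hkm]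
    simp only [hg_def, Set.indicator_apply, Set.mem_setOf_eq]
    exact if_congr hcond (by rw [hval]) rfl
  have hpsZ : ∀ ω, ∀ j ≤ m, psum m (fun i : Fin m => X (1 + i) ω) j = S j ω := by
    intro ω j hj
    rw [hSsum j ω]
    rw [psum_eq m (fun i => X (1 + i) ω) j hj]
    exact Finset.sum_congr rfl fun i _ => by rw [Nat.add_comm]
  have hgZ : ∀ ω, g (fun i : Fin m => X (1 + i) ω)
      = Set.indicator {ω | ∀ j, 1 ≤ j → j ≤ m → 0 ≤ S j ω}
        (fun ω => exp (-ρ * S m ω)) ω := by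
    intro ω
    have hcond : (∀ j, 1 ≤ j → j ≤ m → 0 ≤ psum m (fun i : Fin m => X (1 + i) ω) j)
        ↔ (∀ j, 1 ≤ j → j ≤ m → 0 ≤ S j ω) := by
      refine forall_congr' fun j => ?_
      constructor
      · intro h h1 h2; have := h h1 h2; rwa [hpsZ ω j h2] at this
      · intro h h1 h2; rw [hpsZ ω j h2]; exact h h1 h2
    simp only [hg_def, Set.indicator_apply, Set.mem_setOf_eq]
    exact if_congr hcond (by rw [hpsZ ω m le_rfl]) rfl
  -- measurable sets in Ω
  have hAm : MeasurableSet {ω | ∀ i < k, S k ω < S i ω} := by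
    have h : {ω | ∀ i < k, S k ω < S i ω} = ⋂ i ∈ Finset.range k, {ω | S k ω < S i ω} := by
      ext ω; simp
    rw [h]
    exact Finset.measurableSet_biInter _ fun i _ => measurableSet_lt (hSmeas k) (hSmeas i)
  have hBm : MeasurableSet {ω | ∀ i, k ≤ i → i ≤ n → S k ω ≤ S i ω} := by
    have h : {ω | ∀ i, k ≤ i → i ≤ n → S k ω ≤ S i ω}
        = ⋂ i ∈ Finset.Icc k n, {ω | S k ω ≤ S i ω} := by
      ext ω; simp [Finset.mem_Icc]
    rw [h]
    exact Finset.measurableSet_biInter _ fun i _ => measurableSet_le (hSmeas k) (hSmeas i)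
  have hCm : MeasurableSet {ω | ∀ j, 1 ≤ j → j ≤ m → 0 ≤ S j ω} := by
    have h : {ω | ∀ j, 1 ≤ j → j ≤ m → 0 ≤ S j ω}
        = ⋂ j ∈ Finset.Icc 1 m, {ω | 0 ≤ S j ω} := by
      ext ω; simp [Finset.mem_Icc]
    rw [h]
    exact Finset.measurableSet_biInter _ fun j _ => measurableSet_le measurable_const (hSmeas j)
  -- LHS as integral of a product
  have hLHS : ∫ ω in {ω | (∀ i < k, S k ω < S i ω) ∧ ∀ i, k ≤ i → i ≤ n → S k ω ≤ S i ω},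
      exp ((1 - ρ) * S k ω + ρ * (S k ω - S n ω)) ∂P
      = ∫ ω, f (fun i : Fin k => X (i + 1) ω) * g (fun i : Fin m => X (k + 1 + i) ω) ∂P := by
    have hset : {ω | (∀ i < k, S k ω < S i ω) ∧ ∀ i, k ≤ i → i ≤ n → S k ω ≤ S i ω}
        = {ω | ∀ i < k, S k ω < S i ω} ∩ {ω | ∀ i, k ≤ i → i ≤ n → S k ω ≤ S i ω} := rfl
    rw [hset, ← integral_indicator (hAm.inter hBm)]
    congr 1
    funext ω
    rw [hfY1 ω, hgY2 ω, ← Set.inter_indicator_mul]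
    by_cases h : ω ∈ ({ω | ∀ i < k, S k ω < S i ω} ∩ {ω | ∀ i, k ≤ i → i ≤ n → S k ω ≤ S i ω})
    · rw [Set.indicator_of_mem h, Set.indicator_of_mem h, ← Real.exp_add]
      ring_nf
    · rw [Set.indicator_of_notMem h, Set.indicator_of_notMem h]
  -- independence of the two factors
  have hIndepFG : IndepFun (fun ω => f (fun i : Fin k => X (i + 1) ω))
      (fun ω => g (fun i : Fin m => X (k + 1 + i) ω)) P := by
    have hST : Disjoint (Finset.Icc 1 k) (Finset.Icc (k + 1) n) := by
      rw [Finset.disjoint_left]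
      intro a ha hb
      rw [Finset.mem_Icc] at ha hb
      omega
    have hind0 := hindep.indepFun_finset (Finset.Icc 1 k) (Finset.Icc (k + 1) n) hST hmeas
    set φ : ((i : Finset.Icc 1 k) → ℝ) → (Fin k → ℝ) :=
      fun v i => v ⟨i.val + 1, Finset.mem_Icc.mpr ⟨Nat.le_add_left 1 i, Nat.succ_le_of_lt i.isLt⟩⟩
      with hφ_def
    set ψ : ((i : Finset.Icc (k + 1) n) → ℝ) → (Fin m → ℝ) :=
      fun v i => v ⟨k + 1 + i.val, Finset.mem_Icc.mpr
        ⟨Nat.le_add_right _ _, by have := i.isLt; omega⟩⟩ with hψ_def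
    have hφm : Measurable φ := measurable_pi_lambda _ fun i => measurable_pi_apply _
    have hψm : Measurable ψ := measurable_pi_lambda _ fun i => measurable_pi_apply _
    exact hind0.comp (hfm.comp hφm) (hgm.comp hψm)
  -- split the integral
  have hsplit := hIndepFG.integral_fun_mul_eq_mul_integral
    ((hfm.comp hY1m).aestronglyMeasurable) ((hgm.comp hY2m).aestronglyMeasurable)
  rw [hLHS, hsplit]
  -- first factor
  have hfac1 : ∫ ω, f (fun i : Fin k => X (i + 1) ω) ∂P
      = ∫ ω in {ω | ∀ i < k, S k ω < S i ω}, exp ((1 - ρ) * S k ω) ∂P := by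
    rw [← integral_indicator hAm]
    exact integral_congr_ae (Filter.Eventually.of_forall fun ω => hfY1 ω)
  -- second factor : change of law
  have hfac2 : ∫ ω, g (fun i : Fin m => X (k + 1 + i) ω) ∂P
      = ∫ ω in {ω | ∀ j, 1 ≤ j → j ≤ m → 0 ≤ S j ω}, exp (-ρ * S m ω) ∂P := by
    have hmapk := map_tuple_eq P X hmeas hindep hident m k
    have hmap0 := map_tuple_eq P X hmeas hindep hident m 0
    have h01 : (fun ω (i : Fin m) => X (0 + 1 + i) ω) = fun ω (i : Fin m) => X (1 + i) ω := by
      funext ω i; rw [Nat.zero_add]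
    rw [h01] at hmap0
    have e2 : ∫ ω, g (fun i : Fin m => X (k + 1 + i) ω) ∂P
        = ∫ v, g v ∂(Measure.map (fun ω (i : Fin m) => X (k + 1 + i) ω) P) :=
      (integral_map hY2m.aemeasurable hgm.aestronglyMeasurable).symm
    have e0 : ∫ ω, g (fun i : Fin m => X (1 + i) ω) ∂P
        = ∫ v, g v ∂(Measure.map (fun ω (i : Fin m) => X (1 + i) ω) P) :=
      (integral_map hZm.aemeasurable hgm.aestronglyMeasurable).symm
    rw [e2, hmapk, ← hmap0, ← e0]
    rw [← integral_indicator hCm]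
    exact integral_congr_ae (Filter.Eventually.of_forall fun ω => hgZ ω)
  rw [hfac1, hfac2]
end

section
/- Let X_1, X_2, … be i.i.d. real random variables with partial sums S_n, τ_n the first time of the minimum of S_0,…,S_n, and ρ ∈ (0,1). Then for all 1 ≤ j ≤ n, E[ e^{S_{τ_n} − ρ S_n} ; S_{j-1} ≤ −N, X_j ≥ c ] ≤ e^{−(1−ρ)N} P(X_1 ≥ c) for every N ≥ 0 and c ∈ ℝ. -/
open MeasureTheory ProbabilityTheory Filter Real


private lemma meas_inf' {Ω : Type*} [MeasurableSpace Ω] {t : Finset ℕ} (ht : t.Nonempty)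
    (f : ℕ → Ω → ℝ) (hf : ∀ i, Measurable (f i)) :
    Measurable fun ω => t.inf' ht fun k => f k ω := by
  induction ht using Finset.Nonempty.cons_induction with
  | singleton a => exact hf a
  | cons a s h hs ih =>
      have heq : (fun ω => (Finset.cons a s h).inf' (Finset.cons_nonempty h) fun k => f k ω)
          = fun ω => f a ω ⊓ s.inf' hs fun k => f k ω := by
        funext ω
        exact Finset.inf'_cons ..
      rw [heq]
      exact Measurable.inf' (hf a) ih

/-- for an i.i.d. random walk `S` with minimum value `S_{τ_n} = min_{0≤k≤n} S k`,
`ρ ∈ (0,1)`, `N ≥ 0`, `c ∈ ℝ` and `1 ≤ j ≤ n`,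
`E[exp (S_{τ_n} - ρ S n); S (j-1) ≤ -N, X j ≥ c] ≤ exp (-(1-ρ) N) * P(X 1 ≥ c)`. -/
theorem stmt11 {Ω : Type*} [MeasurableSpace Ω] (P : Measure Ω) [IsProbabilityMeasure P]
    (X : ℕ → Ω → ℝ) (hmeas : ∀ i, Measurable (X i))
    (hindep : iIndepFun X P)
    (hident : ∀ i, Measure.map (X i) P = Measure.map (X 1) P)
    (S : ℕ → Ω → ℝ) (hS0 : ∀ ω, S 0 ω = 0)
    (hSsucc : ∀ m ω, S (m + 1) ω = S m ω + X (m + 1) ω)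
    (ρ N c : ℝ) (hρ : ρ ∈ Set.Ioo (0:ℝ) 1) (hN : 0 ≤ N)
    (n j : ℕ) (hj : 1 ≤ j) (hjn : j ≤ n) :
    ∫ ω in {ω | S (j - 1) ω ≤ -N ∧ c ≤ X j ω},
        exp ((Finset.range (n + 1)).inf' (by simp) (fun k => S k ω) - ρ * S n ω) ∂P ≤
      exp (-(1 - ρ) * N) * (P {ω | c ≤ X 1 ω}).toReal := by
  obtain ⟨hρ0, hρ1⟩ := hρ
  have hSmeas : ∀ m, Measurable (S m) := by
    intro m
    induction m with
    | zero =>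
        have : S 0 = fun _ => (0:ℝ) := funext hS0
        rw [this]; exact measurable_const
    | succ k ih =>
      have : S (k + 1) = fun ω => S k ω + X (k + 1) ω := by funext ω; exact hSsucc k ω
      rw [this]; exact ih.add (hmeas (k + 1))
  set A : Set Ω := {ω | S (j - 1) ω ≤ -N ∧ c ≤ X j ω} with hA
  have hAmeas : MeasurableSet A :=
    ((hSmeas (j - 1)) measurableSet_Iic).inter ((hmeas j) measurableSet_Ici)
  set C : ℝ := exp (-(1 - ρ) * N) with hC
  -- pointwise bound on A
  have hbound : ∀ ω ∈ A, ‖exp ((Finset.range (n + 1)).inf' (by simp) (fun k => S k ω)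
      - ρ * S n ω)‖ ≤ C := by
    intro ω hω
    set m := (Finset.range (n + 1)).inf' (by simp) (fun k => S k ω) with hm
    have hj1mem : j - 1 ∈ Finset.range (n + 1) := by
      simp only [Finset.mem_range]; omega
    have hnmem : n ∈ Finset.range (n + 1) := by simp
    have h1 : m ≤ S (j - 1) ω := Finset.inf'_le _ hj1mem
    have h2 : m ≤ S n ω := Finset.inf'_le _ hnmem
    have hmN : m ≤ -N := h1.trans hω.1
    have key : m - ρ * S n ω ≤ -(1 - ρ) * N := by nlinarith
    rw [Real.norm_eq_abs, abs_of_pos (Real.exp_pos _)]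
    exact Real.exp_le_exp.2 key
  have hPA : P A ≠ ⊤ := measure_ne_top P A
  have hint : ∫ ω in A, exp ((Finset.range (n + 1)).inf' (by simp) (fun k => S k ω)
      - ρ * S n ω) ∂P ≤ C * (P A).toReal := by
    refine le_trans (le_abs_self _) ?_
    rw [← Real.norm_eq_abs]
    exact norm_setIntegral_le_of_norm_le_const (lt_top_iff_ne_top.2 hPA) hbound
  refine hint.trans ?_
  have hAeq : (P {ω | c ≤ X j ω}) = P {ω | c ≤ X 1 ω} := by
    have h1 : {ω | c ≤ X j ω} = X j ⁻¹' Set.Ici c := rfl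
    have h2 : {ω | c ≤ X 1 ω} = X 1 ⁻¹' Set.Ici c := rfl
    rw [h1, h2, ← Measure.map_apply (hmeas j) measurableSet_Ici,
      ← Measure.map_apply (hmeas 1) measurableSet_Ici, hident j]
  have hsub : A ⊆ {ω | c ≤ X j ω} := fun ω hω => hω.2
  have hmono : (P A).toReal ≤ (P {ω | c ≤ X 1 ω}).toReal := by
    rw [← hAeq]
    exact ENNReal.toReal_mono (measure_ne_top P _) (measure_mono hsub)
  exact mul_le_mul_of_nonneg_left hmono (Real.exp_nonneg _)
end
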